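/- Let A be a finite alphabet and k, k' positive integers. Then F_k · F_{k'} = F_{k+k'}, where F_j = {(w,w') ∈ A* × A* : d_F(w,w') ≤ j} and · denotes composition of relations. That is, d_F(w,w') ≤ k + k' holds if and only if there exists w'' ∈ A* with d_F(w,w'') ≤ k and d_F(w'',w') ≤ k'. -/

import Mathlib

open scoped ENNReal

/-- Length of a longest common prefix of `w` and `w'`. -/
noncomputable def lcpLen {A : Type*} (w w' : List A) : ℕ :=
  sSup {n | ∃ p : List A, p.length = n ∧ p <+: w ∧ p <+: w'}

/-- The prefix distance `d_P(w,w') = |w| + |w'| - 2|w ∧ w'|`. -/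
noncomputable def dP {A : Type*} (w w' : List A) : ℕ :=
  w.length + w'.length - 2 * lcpLen w w'

/-- Length of a longest common suffix of `w` and `w'`. -/
noncomputable def lcsLen {A : Type*} (w w' : List A) : ℕ :=
  sSup {n | ∃ s : List A, s.length = n ∧ s <:+ w ∧ s <:+ w'}

/-- The suffix distance `d_S(w,w') = |w| + |w'| - 2|s|`. -/
noncomputable def dS {A : Type*} (w w' : List A) : ℕ :=
  w.length + w'.length - 2 * lcsLen w w'

/-- Length of a longest common factor of `w` and `w'`. -/
noncomputable def lcfLen {A : Type*} (w w' : List A) : ℕ :=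
  sSup {n | ∃ f : List A, f.length = n ∧ f <:+: w ∧ f <:+: w'}

/-- The factor distance `d_F(w,w') = |w| + |w'| - 2|f|`,
`f` a maximum-length common factor. -/
noncomputable def dF {A : Type*} (w w' : List A) : ℕ :=
  w.length + w'.length - 2 * lcfLen w w'

/-- `n`-fold composition of a binary relation. -/
def relPow {α : Type*} (r : α → α → Prop) : ℕ → α → α → Prop
  | 0 => Eq
  | n + 1 => Relation.Comp (relPow r n) r

/-- `X` is a (variable-length) code: every word of `X*` factorizes uniquely over `X`. -/
def IsCode {A : Type*} (X : Set (List A)) : Prop :=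
  ∀ l m : List (List A), (∀ x ∈ l, x ∈ X) → (∀ x ∈ m, x ∈ X) →
    l.flatten = m.flatten → l = m

/-- `X` is complete: every word is a factor of some word of `X*`. -/
def IsCompleteSet {A : Type*} (X : Set (List A)) : Prop :=
  ∀ w : List A, ∃ l : List (List A), (∀ x ∈ l, x ∈ X) ∧ w <:+: l.flatten

/-- `X ⊆ A*` is a regular language: accepted by a finite deterministic automaton. -/
def IsRegularLang {A : Type*} (X : Set (List A)) : Prop :=
  ∃ (Q : Type) (_ : Fintype Q) (M : DFA A Q), M.accepts = X

/-- The uniform Bernoulli measure `μ(X) = Σ_{x ∈ X} |A|^{-|x|}`. -/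
noncomputable def mu (A : Type*) [Fintype A] (X : Set (List A)) : ℝ≥0∞ :=
  ∑' x : X, ((Fintype.card A : ℝ≥0∞))⁻¹ ^ (x : List A).length

section MyHelpers
variable {A : Type*}


lemma lcf_bdd (w w' : List A) :
    BddAbove {n | ∃ f : List A, f.length = n ∧ f <:+: w ∧ f <:+: w'} := by
  refine ⟨w.length, fun n hn => ?_⟩
  obtain ⟨f, hl, hf, _⟩ := hn
  exact hl ▸ hf.length_le

lemma lcfLen_spec (w w' : List A) :
    ∃ f : List A, f.length = lcfLen w w' ∧ f <:+: w ∧ f <:+: w' := by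
  have : lcfLen w w' ∈ {n | ∃ f : List A, f.length = n ∧ f <:+: w ∧ f <:+: w'} :=
    Nat.sSup_mem ⟨0, [], rfl, List.nil_infix, List.nil_infix⟩ (lcf_bdd w w')
  exact this

lemma le_lcfLen {f w w' : List A} (hf : f <:+: w) (hf' : f <:+: w') :
    f.length ≤ lcfLen w w' :=
  le_csSup (lcf_bdd w w') ⟨f, rfl, hf, hf'⟩

lemma lcfLen_comm (w w' : List A) : lcfLen w w' = lcfLen w' w := by
  unfold lcfLen; congr 1; ext n
  exact ⟨fun ⟨f, a, b, c⟩ => ⟨f, a, c, b⟩, fun ⟨f, a, b, c⟩ => ⟨f, a, c, b⟩⟩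

lemma dF_comm (w w' : List A) : dF w w' = dF w' w := by
  unfold dF; rw [lcfLen_comm, Nat.add_comm]

lemma lcfLen_infix {w'' w : List A} (h : w'' <:+: w) : lcfLen w w'' = w''.length := by
  refine le_antisymm ?_ (le_lcfLen h (List.infix_refl _))
  obtain ⟨f, hl, _, hf'⟩ := lcfLen_spec w w''
  exact hl ▸ hf'.length_le

lemma dF_infix {w'' w : List A} (h : w'' <:+: w) : dF w w'' = w.length - w''.length := by
  unfold dF; rw [lcfLen_infix h]; omega

/-- extend an infix to any intermediate length -/
lemma exists_infix_between {f w : List A} (hf : f <:+: w) {m : ℕ}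
    (h1 : f.length ≤ m) (h2 : m ≤ w.length) :
    ∃ g : List A, f <:+: g ∧ g <:+: w ∧ g.length = m := by
  obtain ⟨u, v, e⟩ := hf
  have hw : w.length = u.length + f.length + v.length := by
    subst e; simp; omega
  set s : ℕ := min (m - f.length) v.length with hs
  set r : ℕ := m - f.length - s with hr
  have hru : r ≤ u.length := by omega
  refine ⟨u.drop (u.length - r) ++ f ++ v.take s, ⟨_, _, rfl⟩, ⟨u.take (u.length - r), v.drop s, ?_⟩, ?_⟩
  · rw [← e]; simp only [← List.append_assoc, List.take_append_drop]
    simp [List.append_assoc, List.take_append_drop]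
  · simp; omega

/-- two infixes of `m` have a common infix at least as long as the overlap -/
lemma overlap_aux {f g m : List A} (u1 v1 u2 v2 : List A)
    (e1 : u1 ++ f ++ v1 = m) (e2 : u2 ++ g ++ v2 = m) (hle : u1.length ≤ u2.length) :
    ∃ h : List A, h <:+: f ∧ h <:+: g ∧ f.length + g.length ≤ m.length + h.length := by
  have hm1 : m.length = u1.length + f.length + v1.length := by subst e1; simp; omega
  have hm2 : m.length = u2.length + g.length + v2.length := by subst e2; simp; omega
  by_cases hd : f.length ≤ u2.length - u1.length
  · exact ⟨[], List.nil_infix, List.nil_infix, by simp; omega⟩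
  · set d : ℕ := u2.length - u1.length with hdd
    have hdf : d ≤ f.length := by omega
    set h : List A := (f.drop d).take g.length with hh
    have key : f.drop d ++ v1 = g ++ v2 := by
      have : m.drop u2.length = g ++ v2 := by
        rw [← e2, List.append_assoc, List.drop_left]
      have hu2 : u2.length = u1.length + d := by omega
      rw [← this, ← e1, List.append_assoc, hu2, List.drop_append, List.drop_of_length_le (show u1.length ≤ u1.length + d by omega), Nat.add_sub_cancel_left, List.nil_append,
        List.drop_append_of_le_length hdf]
    have hpre : h <+: g := by
      have h1 : h <+: g ++ v2 := by
        rw [← key]; exact ((f.drop d).take_prefix _).trans (List.prefix_append _ _)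
      have h2 : h.length ≤ g.length := by simp [hh]
      obtain ⟨t, ht⟩ := h1
      have := congrArg (List.take h.length) ht
      rw [List.take_append_of_le_length h2, List.take_left' rfl] at this
      exact this ▸ List.take_prefix _ _
    refine ⟨h, ((f.drop d).take_prefix _).isInfix.trans (f.drop_suffix d).isInfix,
      hpre.isInfix, ?_⟩
    have : h.length = min g.length (f.length - d) := by simp [hh]
    omega

lemma overlap {f g m : List A} (hf : f <:+: m) (hg : g <:+: m) :
    ∃ h : List A, h <:+: f ∧ h <:+: g ∧ f.length + g.length ≤ m.length + h.length := by
  obtain ⟨u1, v1, e1⟩ := hf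
  obtain ⟨u2, v2, e2⟩ := hg
  rcases le_total u1.length u2.length with hle | hle
  · exact overlap_aux u1 v1 u2 v2 e1 e2 hle
  · obtain ⟨h, a, b, c⟩ := overlap_aux u2 v2 u1 v1 e2 e1 hle
    exact ⟨h, b, a, by omega⟩


variable {A : Type*}

lemma key_half {f w w' : List A} (hfw : f <:+: w) (hfw' : f <:+: w') {k k' : ℕ}
    (hlen : w.length + w'.length ≤ k + k' + 2 * f.length)
    (hak : k + f.length ≤ w.length) :
    ∃ w'' : List A, dF w w'' ≤ k ∧ dF w'' w' ≤ k' := by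
  obtain ⟨g, hfg, hgw, hgl⟩ := exists_infix_between hfw
    (show f.length ≤ w.length - k by omega) (by omega)
  have hlcf : f.length ≤ lcfLen g w' := le_lcfLen hfg hfw'
  refine ⟨g, ?_, ?_⟩
  · rw [dF_infix hgw]; omega
  · unfold dF; omega

end MyHelpers

/-- `F_k · F_{k'} = F_{k+k'}`. -/
theorem stmt_1 {A : Type*} [Fintype A] (hA : 2 ≤ Fintype.card A)
    (k k' : ℕ) (hk : 1 ≤ k) (hk' : 1 ≤ k') :
    ∀ w w' : List A, dF w w' ≤ k + k' ↔ ∃ w'' : List A, dF w w'' ≤ k ∧ dF w'' w' ≤ k' := by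
  intro w w'
  constructor
  · intro h
    obtain ⟨f, hfl, hfw, hfw'⟩ := lcfLen_spec w w'
    have hlen : w.length + w'.length ≤ k + k' + 2 * f.length := by
      unfold dF at h; omega
    by_cases hc : w.length ≤ k + f.length
    · by_cases hc' : w'.length ≤ k' + f.length
      · refine ⟨f, ?_, ?_⟩
        · rw [dF_infix hfw]; omega
        · rw [dF_comm, dF_infix hfw']; omega
      · obtain ⟨w'', h1, h2⟩ := key_half (k := k') (k' := k) hfw' hfw (by omega) (by omega)
        exact ⟨w'', (dF_comm w w'') ▸ h2, (dF_comm w'' w') ▸ h1⟩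
    · exact key_half hfw hfw' hlen (by omega)
  · rintro ⟨w'', h1, h2⟩
    obtain ⟨f, hfl, hfw, hfw''⟩ := lcfLen_spec w w''
    obtain ⟨g, hgl, hgw'', hgw'⟩ := lcfLen_spec w'' w'
    obtain ⟨h, hhf, hhg, hov⟩ := overlap hfw'' hgw''
    have hl : h.length ≤ lcfLen w w' := le_lcfLen (hhf.trans hfw) (hhg.trans hgw')
    unfold dF at h1 h2 ⊢
    omega
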